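/- arXiv:2605.28380 — 2 statements merged into one kernel-verified Lean document; each statement's English description precedes it below -/
import Mathlib

section
/- Let λ > 0 and let A : E → E be a self-adjoint linear map with 0 ≤ ⟨A v, v⟩ and ⟨A v, v⟩ < λ‖v‖² for all v ≠ 0. Set S := id − λ⁻¹ A. Then S∘A∘S is self-adjoint and positive semidefinite, and its operator norm satisfies ‖S∘A∘S‖ ≤ (4/27)·λ < λ/4. -/
open RealInnerProductSpace

-- polarization-style norm bound for symmetric PSD-bounded operators
theorem aux_norm_le {E : Type*} [NormedAddCommGroup E] [InnerProductSpace ℝ E]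
    (T : E →L[ℝ] E) (c : ℝ) (hc : 0 ≤ c)
    (hsym : ∀ x y : E, ⟪T x, y⟫ = ⟪x, T y⟫)
    (h0 : ∀ v : E, 0 ≤ ⟪T v, v⟫)
    (h1 : ∀ v : E, ⟪T v, v⟫ ≤ c * ‖v‖ ^ 2) :
    ‖T‖ ≤ c := by
  apply T.opNorm_le_bound hc
  intro x
  rcases eq_or_ne (T x) 0 with h | h
  · simp [h]; positivity
  · set y : E := (‖x‖ / ‖T x‖) • T x with hy
    have hyn : ‖y‖ = ‖x‖ := by
      rw [hy, norm_smul]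
      have : 0 < ‖T x‖ := norm_pos_iff.mpr h
      rw [Real.norm_eq_abs, abs_of_nonneg (by positivity)]
      field_simp
    have hpol : 4 * ⟪T x, y⟫ ≤ ⟪T (x + y), x + y⟫ := by
      have hTyx : ⟪T y, x⟫ = ⟪T x, y⟫ := by
        rw [hsym, real_inner_comm]
      have e1 : ⟪T (x + y), x + y⟫ = ⟪T x, x⟫ + 2 * ⟪T x, y⟫ + ⟪T y, y⟫ := by
        simp [map_add, inner_add_left, inner_add_right, hTyx]; ring
      have e2 : 0 ≤ ⟪T x, x⟫ - 2 * ⟪T x, y⟫ + ⟪T y, y⟫ := by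
        have := h0 (x - y)
        have e3 : ⟪T (x - y), x - y⟫ = ⟪T x, x⟫ - 2 * ⟪T x, y⟫ + ⟪T y, y⟫ := by
          simp [map_sub, inner_sub_left, inner_sub_right, hTyx]; ring
        linarith [e3 ▸ this]
      linarith [e1]
    have hxy : ⟪T (x + y), x + y⟫ ≤ c * ‖x + y‖ ^ 2 := h1 _
    have hnxy : ‖x + y‖ ^ 2 ≤ (2 * ‖x‖) ^ 2 := by
      have := norm_add_le x y
      nlinarith [norm_nonneg (x + y), norm_nonneg x, hyn]
    have hval : ⟪T x, y⟫ = ‖x‖ * ‖T x‖ := by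
      have : 0 < ‖T x‖ := norm_pos_iff.mpr h
      rw [hy, real_inner_smul_right, real_inner_self_eq_norm_sq]
      field_simp
    have : 4 * (‖x‖ * ‖T x‖) ≤ c * (2 * ‖x‖) ^ 2 := by
      calc 4 * (‖x‖ * ‖T x‖) = 4 * ⟪T x, y⟫ := by rw [hval]
        _ ≤ ⟪T (x + y), x + y⟫ := hpol
        _ ≤ c * ‖x + y‖ ^ 2 := hxy
        _ ≤ c * (2 * ‖x‖) ^ 2 := by nlinarith
    rcases eq_or_ne x 0 with hx | hx
    · exact absurd (by simp [hx]) h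
    · have hxpos : 0 < ‖x‖ := norm_pos_iff.mpr hx
      nlinarith

theorem aux_key {E : Type*} [NormedAddCommGroup E] [InnerProductSpace ℝ E]
    (lam : ℝ) (hlam : 0 < lam) (A : E →L[ℝ] E)
    (hsym : ∀ x y : E, ⟪A x, y⟫ = ⟪x, A y⟫)
    (hub' : ∀ v : E, ⟪A v, v⟫ ≤ lam * ‖v‖ ^ 2)
    (v : E) :
    ⟪A (v - lam⁻¹ • A v), v - lam⁻¹ • A v⟫ ≤ (4 / 27) * lam * ‖v‖ ^ 2 := by
  set w : E := A v - (lam / 3) • v with hw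
  have hbound : ⟪A w, w⟫ ≤ (4 / 3) * lam * ‖w‖ ^ 2 := by
    have h1 := hub' w
    nlinarith [sq_nonneg ‖w‖]
  have h2 : ⟪A v, A v⟫ = ⟪A (A v), v⟫ := (hsym (A v) v).symm
  have h3 : ⟪A (A v), A v⟫ = ⟪A (A (A v)), v⟫ := (hsym (A (A v)) v).symm
  have h4 : ⟪v, A v⟫ = ⟪A v, v⟫ := real_inner_comm _ _
  have h5 : ⟪v, A (A v)⟫ = ⟪A (A v), v⟫ := real_inner_comm _ _
  have h6 : ⟪A v, A (A v)⟫ = ⟪A (A (A v)), v⟫ := by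
    rw [real_inner_comm]; exact h3
  have key : (4 / 27) * lam * ‖v‖ ^ 2 - ⟪A (v - lam⁻¹ • A v), v - lam⁻¹ • A v⟫
      = lam⁻¹ ^ 2 * ((4 / 3) * lam * ‖w‖ ^ 2 - ⟪A w, w⟫) := by
    rw [← real_inner_self_eq_norm_sq, ← real_inner_self_eq_norm_sq]
    simp only [hw, map_sub, map_smul, inner_sub_left, inner_sub_right,
      inner_smul_left, inner_smul_right, RCLike.star_def, starRingEnd_apply,
      star_trivial, h2, h3, h4, h5, h6]
    field_simp
    ring
  nlinarith [key, hbound, sq_nonneg lam⁻¹]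

/-- Spectral bound for the smoothed operator: if `A` is self-adjoint with
`0 ≤ ⟨A v, v⟩` for all `v` and `⟨A v, v⟩ < λ‖v‖²` for all `v ≠ 0`, and
`S = I − λ⁻¹A`, then `S∘A∘S` is self-adjoint positive semidefinite with
`‖S∘A∘S‖ ≤ (4/27)·λ < λ/4`. -/
theorem smoothed_operator_norm_bound
    {E : Type*} [NormedAddCommGroup E] [InnerProductSpace ℝ E]
    [FiniteDimensional ℝ E]
    (lam : ℝ) (hlam : 0 < lam) (A : E →L[ℝ] E)
    (hsym : ∀ x y : E, (inner ℝ (A x) y : ℝ) = inner ℝ x (A y))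
    (hpsd : ∀ v : E, 0 ≤ (inner ℝ (A v) v : ℝ))
    (hub : ∀ v : E, v ≠ 0 → (inner ℝ (A v) v : ℝ) < lam * ‖v‖ ^ 2) :
    ∀ S : E →L[ℝ] E, S = ContinuousLinearMap.id ℝ E - lam⁻¹ • A →
      (∀ x y : E, (inner ℝ ((S.comp (A.comp S)) x) y : ℝ) = inner ℝ x ((S.comp (A.comp S)) y)) ∧
      (∀ v : E, 0 ≤ (inner ℝ ((S.comp (A.comp S)) v) v : ℝ)) ∧
      ‖S.comp (A.comp S)‖ ≤ (4 / 27) * lam ∧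
      (4 / 27) * lam < lam / 4 := by
  intro S hS
  have hSapp : ∀ x : E, S x = x - lam⁻¹ • A x := by
    intro x
    simp [hS, ContinuousLinearMap.sub_apply, ContinuousLinearMap.smul_apply]
  have hSsym : ∀ x y : E, ⟪S x, y⟫ = ⟪x, S y⟫ := by
    intro x y
    rw [hSapp, hSapp, inner_sub_left, inner_sub_right, real_inner_smul_left,
      real_inner_smul_right, hsym]
  have hTapp : ∀ x : E, (S.comp (A.comp S)) x = S (A (S x)) := fun x => rfl
  have hTsym : ∀ x y : E, ⟪(S.comp (A.comp S)) x, y⟫ = ⟪x, (S.comp (A.comp S)) y⟫ := by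
    intro x y
    rw [hTapp, hTapp, hSsym, hsym, ← hSsym]
  have hTval : ∀ v : E, ⟪(S.comp (A.comp S)) v, v⟫ = ⟪A (S v), S v⟫ := by
    intro v
    rw [hTapp, hSsym, real_inner_comm]
  have hTpsd : ∀ v : E, 0 ≤ ⟪(S.comp (A.comp S)) v, v⟫ := by
    intro v; rw [hTval]; exact hpsd _
  have hub' : ∀ v : E, ⟪A v, v⟫ ≤ lam * ‖v‖ ^ 2 := by
    intro v
    rcases eq_or_ne v 0 with h | h
    · simp [h]
    · exact (hub v h).le
  have hTub : ∀ v : E, ⟪(S.comp (A.comp S)) v, v⟫ ≤ (4 / 27) * lam * ‖v‖ ^ 2 := by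
    intro v
    rw [hTval, hSapp]
    exact aux_key lam hlam A hsym hub' v
  exact ⟨hTsym, hTpsd,
    aux_norm_le _ _ (by positivity) hTsym hTpsd hTub,
    by nlinarith⟩
end

section
/- Let J ≥ 1, let V_1, …, V_J be finite-dimensional real inner product spaces, and for 1 ≤ j ≤ J−1 let P_j : V_j → V_{j+1} be linear maps with ‖P_j v‖ ≤ ‖v‖ for all v ∈ V_j. Let λ > 0, set λ_j := 4^{j−J}·λ for 1 ≤ j ≤ J, and let A_J : V_J → V_J be a self-adjoint positive semidefinite linear map with ‖A_J‖ < λ = λ_J. Define recursively, for j = J−1 down to 1, S_{j+1} := id_{V_{j+1}} − λ_{j+1}⁻¹·A_{j+1} and A_j := (S_{j+1}∘P_j)† ∘ A_{j+1} ∘ (S_{j+1}∘P_j), where † denotes the adjoint. Then for every 1 ≤ j ≤ J−1, the operator A_j is self-adjoint positive semidefinite and ‖A_j‖ ≤ ‖S_{j+1}∘A_{j+1}∘S_{j+1}‖ < 4^{j−J}·λ = λ_j. -/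
open ContinuousLinearMap

/-- The prolongator smoother `S = I − λ⁻¹A`. -/
noncomputable def smoother {E : Type*} [NormedAddCommGroup E] [InnerProductSpace ℝ E]
    (lam : ℝ) (A : E →L[ℝ] E) : E →L[ℝ] E :=
  ContinuousLinearMap.id ℝ E - lam⁻¹ • A

/-- norm of a symmetric operator bounded by bound on quadratic form -/
lemma sym_norm_le' {E : Type*} [NormedAddCommGroup E] [InnerProductSpace ℝ E]
    (T : E →L[ℝ] E) (hsym : ∀ x y : E, (inner ℝ (T x) y : ℝ) = inner ℝ x (T y))
    {c : ℝ} (hc : 0 ≤ c) (hbound : ∀ v : E, |(inner ℝ (T v) v : ℝ)| ≤ c * ‖v‖ ^ 2) :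
    ‖T‖ ≤ c := by
  refine T.opNorm_le_bound hc fun x => ?_
  by_cases hTx : T x = 0
  · simp [hTx]; positivity
  have hTxn : 0 < ‖T x‖ := norm_pos_iff.mpr hTx
  set y : E := (‖x‖ / ‖T x‖) • T x with hy
  have hyn : ‖y‖ = ‖x‖ := by
    rw [hy, norm_smul, Real.norm_eq_abs,
      abs_of_nonneg (div_nonneg (norm_nonneg x) (norm_nonneg _))]
    field_simp
  have hinner : (inner ℝ (T x) y : ℝ) = ‖x‖ * ‖T x‖ := by
    rw [hy, real_inner_smul_right, real_inner_self_eq_norm_sq]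
    field_simp
  have h1 : (inner ℝ (T y) x : ℝ) = inner ℝ (T x) y := by
    rw [hsym y x, real_inner_comm]
  have pol : 4 * (inner ℝ (T x) y : ℝ)
      = inner ℝ (T (x + y)) (x + y) - inner ℝ (T (x - y)) (x - y) := by
    simp only [map_add, map_sub, inner_add_left, inner_add_right, inner_sub_left,
      inner_sub_right]
    linarith [h1]
  have h2 : (inner ℝ (T (x + y)) (x + y) : ℝ) ≤ c * ‖x + y‖ ^ 2 :=
    (le_abs_self _).trans (hbound _)
  have h3 : -(c * ‖x - y‖ ^ 2) ≤ (inner ℝ (T (x - y)) (x - y) : ℝ) :=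
    neg_le_of_abs_le (hbound _)
  have hpar : ‖x + y‖ ^ 2 + ‖x - y‖ ^ 2 = 2 * (‖x‖ ^ 2 + ‖y‖ ^ 2) := by
    rw [@norm_add_sq_real, @norm_sub_sq_real]; ring
  have h5 : c * (‖x + y‖ ^ 2 + ‖x - y‖ ^ 2) = 2 * c * (‖x‖ ^ 2 + ‖y‖ ^ 2) := by
    rw [hpar]; ring
  have hyn2 : ‖y‖ ^ 2 = ‖x‖ ^ 2 := by rw [hyn]
  have h4 : 4 * (‖x‖ * ‖T x‖) ≤ 4 * (c * ‖x‖ ^ 2) := by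
    rw [← hinner]
    nlinarith [pol, h2, h3, h5, hyn2]
  by_cases hx : x = 0
  · exact absurd (by simp [hx]) hTx
  have hxn : 0 < ‖x‖ := norm_pos_iff.mpr hx
  nlinarith


/-- key quadratic bound: `⟪A(μv−Av), μv−Av⟫ ≤ (4μ³/27)‖v‖²`. -/
lemma quad_bound' {F : Type*} [NormedAddCommGroup F] [InnerProductSpace ℝ F]
    (mu : ℝ) (hmu : 0 < mu) (A : F →L[ℝ] F)
    (hsym : ∀ x y : F, (inner ℝ (A x) y : ℝ) = inner ℝ x (A y))
    (hnorm : ‖A‖ < mu) (v : F) :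
    (inner ℝ (A (mu • v - A v)) (mu • v - A v) : ℝ) ≤ 4 * mu ^ 3 / 27 * ‖v‖ ^ 2 := by
  set w : F := A v - (mu / 3) • v with hw
  have hAw : (inner ℝ (A w) w : ℝ) ≤ ‖A‖ * ‖w‖ ^ 2 := by
    have := real_inner_le_norm (A w) w
    have := A.le_opNorm w
    nlinarith [norm_nonneg w, norm_nonneg (A w)]
  have hC : 0 ≤ (inner ℝ ((4 * mu / 3) • w - A w) w : ℝ) := by
    rw [inner_sub_left, real_inner_smul_left, real_inner_self_eq_norm_sq]
    nlinarith [sq_nonneg ‖w‖]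
  have e1 : (inner ℝ (A (A v)) v : ℝ) = inner ℝ (A v) (A v) := hsym (A v) v
  have e2 : (inner ℝ v (A v) : ℝ) = inner ℝ (A v) v := real_inner_comm _ _
  have e3 : (inner ℝ v (A (A v)) : ℝ) = inner ℝ (A v) (A v) := by
    rw [real_inner_comm]; exact e1
  have e4 : (inner ℝ (A v) (A (A v)) : ℝ) = inner ℝ (A (A v)) (A v) := real_inner_comm _ _
  have e5 : (inner ℝ (A v) (A v) : ℝ) = ‖A v‖ ^ 2 := real_inner_self_eq_norm_sq _
  have idy : (inner ℝ (A (mu • v - A v)) (mu • v - A v) : ℝ)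
      = 4 * mu ^ 3 / 27 * ‖v‖ ^ 2 - inner ℝ ((4 * mu / 3) • w - A w) w := by
    simp only [hw, map_sub, map_smul, smul_sub, smul_smul, inner_sub_left, inner_sub_right,
      real_inner_smul_left, real_inner_smul_right, real_inner_self_eq_norm_sq]
    rw [e1, e2, e5]
    ring
  linarith [idy, hC]


/-- one coarsening step -/
lemma step_lemma' {E F : Type*} [NormedAddCommGroup E] [InnerProductSpace ℝ E] [CompleteSpace E]
    [NormedAddCommGroup F] [InnerProductSpace ℝ F] [CompleteSpace F]
    (mu : ℝ) (hmu : 0 < mu) (A : F →L[ℝ] F)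
    (hsym : ∀ x y : F, (inner ℝ (A x) y : ℝ) = inner ℝ x (A y))
    (hpsd : ∀ v : F, 0 ≤ (inner ℝ (A v) v : ℝ))
    (hnorm : ‖A‖ < mu)
    (P : E →L[ℝ] F) (hP : ∀ v : E, ‖P v‖ ≤ ‖v‖)
    (B : E →L[ℝ] E)
    (hB : B = (adjoint ((smoother mu A).comp P)).comp (A.comp ((smoother mu A).comp P))) :
    (∀ x y : E, (inner ℝ (B x) y : ℝ) = inner ℝ x (B y)) ∧
    (∀ v : E, 0 ≤ (inner ℝ (B v) v : ℝ)) ∧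
    ‖B‖ ≤ ‖(smoother mu A).comp (A.comp (smoother mu A))‖ ∧
    ‖(smoother mu A).comp (A.comp (smoother mu A))‖ < mu / 4 := by
  set S : F →L[ℝ] F := smoother mu A with hS
  have hSsym : ∀ x y : F, (inner ℝ (S x) y : ℝ) = inner ℝ x (S y) := by
    intro x y
    simp only [hS, smoother, ContinuousLinearMap.sub_apply, ContinuousLinearMap.smul_apply,
      ContinuousLinearMap.id_apply, inner_sub_left, inner_sub_right,
      real_inner_smul_left, real_inner_smul_right, hsym]
  have hSv : ∀ v : F, S v = mu⁻¹ • (mu • v - A v) := by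
    intro v
    simp only [hS, smoother, ContinuousLinearMap.sub_apply, ContinuousLinearMap.smul_apply,
      ContinuousLinearMap.id_apply, smul_sub, smul_smul, inv_mul_cancel₀ hmu.ne', one_smul]
  set T : F →L[ℝ] F := S.comp (A.comp S) with hT
  have hTval : ∀ v : F, (inner ℝ (T v) v : ℝ) = inner ℝ (A (S v)) (S v) := by
    intro v
    rw [hT, ContinuousLinearMap.comp_apply, ContinuousLinearMap.comp_apply, hSsym]
  have hTpsd : ∀ v : F, 0 ≤ (inner ℝ (T v) v : ℝ) := fun v => (hTval v) ▸ hpsd (S v)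
  have hTsym : ∀ x y : F, (inner ℝ (T x) y : ℝ) = inner ℝ x (T y) := by
    intro x y
    rw [hT]
    simp only [ContinuousLinearMap.comp_apply]
    rw [hSsym, hsym, ← hSsym]
  have hTbound : ∀ v : F, (inner ℝ (T v) v : ℝ) ≤ 4 * mu / 27 * ‖v‖ ^ 2 := by
    intro v
    rw [hTval, hSv v]
    rw [map_smul, real_inner_smul_left, real_inner_smul_right]
    have hq := quad_bound' mu hmu A hsym hnorm v
    have h27 : mu⁻¹ * (mu⁻¹ * (4 * mu ^ 3 / 27 * ‖v‖ ^ 2)) = 4 * mu / 27 * ‖v‖ ^ 2 := by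
      field_simp
    calc mu⁻¹ * (mu⁻¹ * (inner ℝ (A (mu • v - A v)) (mu • v - A v) : ℝ))
        ≤ mu⁻¹ * (mu⁻¹ * (4 * mu ^ 3 / 27 * ‖v‖ ^ 2)) := by
          have hmi : 0 ≤ mu⁻¹ := (inv_nonneg).mpr hmu.le
          exact mul_le_mul_of_nonneg_left (mul_le_mul_of_nonneg_left hq hmi) hmi
      _ = 4 * mu / 27 * ‖v‖ ^ 2 := h27
  have hTnorm : ‖T‖ ≤ 4 * mu / 27 := by
    refine sym_norm_le' T hTsym (by positivity) fun v => ?_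
    rw [abs_of_nonneg (hTpsd v)]
    exact hTbound v
  have hTlt : ‖T‖ < mu / 4 := lt_of_le_of_lt hTnorm (by nlinarith)
  have hBval : ∀ x y : E, (inner ℝ (B x) y : ℝ) = inner ℝ (A (S (P x))) (S (P y)) := by
    intro x y
    rw [hB]
    simp only [ContinuousLinearMap.comp_apply]
    rw [ContinuousLinearMap.adjoint_inner_left]
    simp only [ContinuousLinearMap.comp_apply]
  have hBsym : ∀ x y : E, (inner ℝ (B x) y : ℝ) = inner ℝ x (B y) := by
    intro x y
    rw [hBval, hsym, real_inner_comm, ← hBval y x, real_inner_comm]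
  have hBpsd : ∀ v : E, 0 ≤ (inner ℝ (B v) v : ℝ) := fun v => (hBval v v) ▸ hpsd (S (P v))
  have hBnorm : ‖B‖ ≤ ‖T‖ := by
    refine sym_norm_le' B hBsym (norm_nonneg T) fun v => ?_
    rw [abs_of_nonneg (hBpsd v), hBval, ← hTval (P v)]
    have h1 : (inner ℝ (T (P v)) (P v) : ℝ) ≤ ‖T (P v)‖ * ‖P v‖ := real_inner_le_norm _ _
    have h2 : ‖T (P v)‖ ≤ ‖T‖ * ‖P v‖ := T.le_opNorm _
    have h3 : ‖P v‖ ≤ ‖v‖ := hP v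
    have h4 : ‖T (P v)‖ * ‖P v‖ ≤ ‖T‖ * ‖P v‖ * ‖P v‖ :=
      mul_le_mul_of_nonneg_right h2 (norm_nonneg _)
    have h5 : ‖T‖ * (‖P v‖ * ‖P v‖) ≤ ‖T‖ * (‖v‖ * ‖v‖) :=
      mul_le_mul_of_nonneg_left
        (mul_le_mul h3 h3 (norm_nonneg _) (norm_nonneg _)) (norm_nonneg T)
    nlinarith [h1, h4, h5]
  exact ⟨hBsym, hBpsd, hBnorm, hTlt⟩


/-- Lemma 5.6 (le_Ajupper), abstractly: given levels `V_1, …, V_J` with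
norm-nonincreasing transfer operators `P_j : V_j → V_{j+1}` for `1 ≤ j ≤ J−1`,
`λ_j := 4^{j−J}·λ`, a self-adjoint positive semidefinite fine-level operator `A_J`
with `‖A_J‖ < λ = λ_J`, and the recursively defined coarse operators
`A_j := (S_{j+1}∘P_j)† ∘ A_{j+1} ∘ (S_{j+1}∘P_j)` with `S_{j+1} := I − λ_{j+1}⁻¹ A_{j+1}`,
each `A_j` (for `1 ≤ j ≤ J−1`) is self-adjoint positive semidefinite and satisfies
`‖A_j‖ ≤ ‖S_{j+1}∘A_{j+1}∘S_{j+1}‖ < 4^{j−J}·λ = λ_j`. -/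
theorem coarse_level_operator_norm_bound
    (V : ℕ → Type*)
    [∀ j, NormedAddCommGroup (V j)] [∀ j, InnerProductSpace ℝ (V j)]
    [∀ j, FiniteDimensional ℝ (V j)]
    (J : ℕ) (hJ : 1 ≤ J)
    (P : ∀ j : ℕ, V j →L[ℝ] V (j + 1))
    (hP : ∀ j : ℕ, 1 ≤ j → j ≤ J - 1 → ∀ v : V j, ‖P j v‖ ≤ ‖v‖)
    (lam : ℝ) (hlam : 0 < lam)
    (A : ∀ j : ℕ, V j →L[ℝ] V j)
    (hAJsym : ∀ x y : V J, (inner ℝ (A J x) y : ℝ) = inner ℝ x (A J y))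
    (hAJpsd : ∀ v : V J, 0 ≤ (inner ℝ (A J v) v : ℝ))
    (hAJnorm : ‖A J‖ < lam)
    (hrec : ∀ j : ℕ, 1 ≤ j → j ≤ J - 1 →
      A j = (adjoint ((smoother ((4 : ℝ) ^ (((j : ℤ) + 1) - (J : ℤ)) * lam) (A (j + 1))).comp (P j))).comp
        ((A (j + 1)).comp
          ((smoother ((4 : ℝ) ^ (((j : ℤ) + 1) - (J : ℤ)) * lam) (A (j + 1))).comp (P j)))) :
    ∀ j : ℕ, 1 ≤ j → j ≤ J - 1 →
      (∀ x y : V j, (inner ℝ (A j x) y : ℝ) = inner ℝ x (A j y)) ∧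
      (∀ v : V j, 0 ≤ (inner ℝ (A j v) v : ℝ)) ∧
      ‖A j‖ ≤ ‖(smoother ((4 : ℝ) ^ (((j : ℤ) + 1) - (J : ℤ)) * lam) (A (j + 1))).comp
          ((A (j + 1)).comp (smoother ((4 : ℝ) ^ (((j : ℤ) + 1) - (J : ℤ)) * lam) (A (j + 1))))‖ ∧
      ‖(smoother ((4 : ℝ) ^ (((j : ℤ) + 1) - (J : ℤ)) * lam) (A (j + 1))).comp
          ((A (j + 1)).comp (smoother ((4 : ℝ) ^ (((j : ℤ) + 1) - (J : ℤ)) * lam) (A (j + 1))))‖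
        < (4 : ℝ) ^ ((j : ℤ) - (J : ℤ)) * lam := by
  -- downward induction: for any `j` with `1 ≤ j ≤ J`, `A j` is symmetric, psd,
  -- with `‖A j‖ < 4^(j-J) * lam`
  have key : ∀ d j : ℕ, 1 ≤ j → j + d = J →
      (∀ x y : V j, (inner ℝ (A j x) y : ℝ) = inner ℝ x (A j y)) ∧
      (∀ v : V j, 0 ≤ (inner ℝ (A j v) v : ℝ)) ∧
      ‖A j‖ < (4 : ℝ) ^ ((j : ℤ) - (J : ℤ)) * lam := by
    intro d
    induction d with
    | zero =>
      intro j h1 hjJ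
      have hj : j = J := by omega
      subst hj
      refine ⟨hAJsym, hAJpsd, ?_⟩
      rw [sub_self, zpow_zero, one_mul]
      exact hAJnorm
    | succ d ih =>
      intro j h1 hjJ
      obtain ⟨hsym', hpsd', hnorm'⟩ := ih (j + 1) (by omega) (by omega)
      have hcast : (((j + 1 : ℕ) : ℤ)) - (J : ℤ) = ((j : ℤ) + 1) - (J : ℤ) := by push_cast; ring
      rw [hcast] at hnorm'
      set mu : ℝ := (4 : ℝ) ^ (((j : ℤ) + 1) - (J : ℤ)) * lam with hmudef
      have hmu : 0 < mu := mul_pos (zpow_pos (by norm_num) _) hlam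
      obtain ⟨bsym, bpsd, bnorm, tnorm⟩ :=
        step_lemma' mu hmu (A (j + 1)) hsym' hpsd' hnorm' (P j)
          (hP j h1 (by omega)) (A j) (hrec j h1 (by omega))
      refine ⟨bsym, bpsd, ?_⟩
      have hq : mu / 4 = (4 : ℝ) ^ ((j : ℤ) - (J : ℤ)) * lam := by
        rw [hmudef]
        have : ((j : ℤ) + 1) - (J : ℤ) = ((j : ℤ) - (J : ℤ)) + 1 := by ring
        rw [this, zpow_add_one₀ (by norm_num : (4 : ℝ) ≠ 0)]
        ring
      rw [← hq]
      exact lt_of_le_of_lt bnorm tnorm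
  intro j h1 h2
  obtain ⟨hsym', hpsd', hnorm'⟩ := key (J - (j + 1)) (j + 1) (by omega) (by omega)
  have hcast : (((j + 1 : ℕ) : ℤ)) - (J : ℤ) = ((j : ℤ) + 1) - (J : ℤ) := by push_cast; ring
  rw [hcast] at hnorm'
  set mu : ℝ := (4 : ℝ) ^ (((j : ℤ) + 1) - (J : ℤ)) * lam with hmudef
  have hmu : 0 < mu := mul_pos (zpow_pos (by norm_num) _) hlam
  obtain ⟨bsym, bpsd, bnorm, tnorm⟩ :=
    step_lemma' mu hmu (A (j + 1)) hsym' hpsd' hnorm' (P j)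
      (hP j h1 h2) (A j) (hrec j h1 h2)
  have hq : mu / 4 = (4 : ℝ) ^ ((j : ℤ) - (J : ℤ)) * lam := by
    rw [hmudef]
    have : ((j : ℤ) + 1) - (J : ℤ) = ((j : ℤ) - (J : ℤ)) + 1 := by ring
    rw [this, zpow_add_one₀ (by norm_num : (4 : ℝ) ≠ 0)]
    ring
  exact ⟨bsym, bpsd, bnorm, hq ▸ tnorm⟩
end
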